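/- Let C be an idempotent complete (Karoubian) triangulated category equipped with a weight structure w, and let m ≤ n be integers. If an object O of C is without weights m,…,n, then there exists a distinguished triangle X → O → Y → X[1] with X ∈ C_{w≤m−1} and Y ∈ C_{w≥n+1}. -/

import Mathlib

open CategoryTheory CategoryTheory.Limits CategoryTheory.Pretriangulated ZeroObject

universe v u

variable (C : Type u) [Category.{v} C] [HasZeroObject C] [Preadditive C] [HasShift C ℤ]
  [∀ n : ℤ, (shiftFunctor C n).Additive] [Pretriangulated C]

/-- A weight structure on a triangulated category `C`: a pair of retract-closed classes
`le = C_{w≤0}` and `ge = C_{w≥0}` satisfying semi-invariance with respect to translations,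
orthogonality, and the existence of weight decompositions. -/
structure WeightStructure where
  /-- the class `C_{w≤0}` -/
  le : Set C
  /-- the class `C_{w≥0}` -/
  ge : Set C
  /-- `C_{w≤0}` is closed under retracts -/
  le_retract : ∀ ⦃X Y : C⦄ (i : X ⟶ Y) (r : Y ⟶ X), i ≫ r = 𝟙 X → le Y → le X
  /-- `C_{w≥0}` is closed under retracts -/
  ge_retract : ∀ ⦃X Y : C⦄ (i : X ⟶ Y) (r : Y ⟶ X), i ≫ r = 𝟙 X → ge Y → ge X
  /-- `C_{w≤0} ⊆ C_{w≤0}[1]`, i.e. `X ∈ C_{w≤0} → X[-1] ∈ C_{w≤0}` -/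
  le_shift : ∀ ⦃X : C⦄, le X → le ((shiftFunctor C (-1 : ℤ)).obj X)
  /-- `C_{w≥0}[1] ⊆ C_{w≥0}`, i.e. `X ∈ C_{w≥0} → X[1] ∈ C_{w≥0}` -/
  ge_shift : ∀ ⦃X : C⦄, ge X → ge ((shiftFunctor C (1 : ℤ)).obj X)
  /-- orthogonality: `Hom(X, Y[1]) = 0` for `X ∈ C_{w≤0}`, `Y ∈ C_{w≥0}` -/
  orth : ∀ ⦃X Y : C⦄, le X → ge Y → ∀ f : X ⟶ (shiftFunctor C (1 : ℤ)).obj Y, f = 0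
  /-- existence of weight decompositions -/
  decomp : ∀ M : C, ∃ (X Y : C) (f : X ⟶ M) (g : M ⟶ Y)
      (h : Y ⟶ (shiftFunctor C (1 : ℤ)).obj X),
      Triangle.mk f g h ∈ (distTriang C) ∧ le X ∧ ge ((shiftFunctor C (-1 : ℤ)).obj Y)

variable {C}

namespace WeightStructure

/-- `X ∈ C_{w≤i} = C_{w≤0}[i]`, i.e. `X[-i] ∈ C_{w≤0}`. -/
def leDeg (w : WeightStructure C) (i : ℤ) (X : C) : Prop :=
  w.le ((shiftFunctor C (-i)).obj X)

/-- `X ∈ C_{w≥i} = C_{w≥0}[i]`, i.e. `X[-i] ∈ C_{w≥0}`. -/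
def geDeg (w : WeightStructure C) (i : ℤ) (X : C) : Prop :=
  w.ge ((shiftFunctor C (-i)).obj X)

/-- The triangle `A → M → B → A[1]` is an `m`-weight decomposition of `M`:
it is distinguished, `A ∈ C_{w≤m}` and `B ∈ C_{w≥m+1}`. -/
def IsWeightDecomp (w : WeightStructure C) (m : ℤ) {A M B : C}
    (f : A ⟶ M) (g : M ⟶ B) (h : B ⟶ (shiftFunctor C (1 : ℤ)).obj A) : Prop :=
  Triangle.mk f g h ∈ (distTriang C) ∧ w.leDeg m A ∧ w.geDeg (m + 1) B

/-- `g : M ⟶ N` kills weights `m,…,n`: there exist an `n`-weight decomposition of `M` and an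
`(m-1)`-weight decomposition of `N` such that the composite `w_{≤n}M → M → N → w_{≥m}N` is `0`. -/
def KillsWeights (w : WeightStructure C) (m n : ℤ) {M N : C} (g : M ⟶ N) : Prop :=
  ∃ (A B A' B' : C) (f : A ⟶ M) (p : M ⟶ B) (δ : B ⟶ (shiftFunctor C (1 : ℤ)).obj A)
    (f' : A' ⟶ N) (p' : N ⟶ B') (δ' : B' ⟶ (shiftFunctor C (1 : ℤ)).obj A'),
    w.IsWeightDecomp n f p δ ∧ w.IsWeightDecomp (m - 1) f' p' δ' ∧ f ≫ g ≫ p' = 0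

/-- `M` is without weights `m,…,n` if `𝟙 M` kills weights `m,…,n`. -/
def WithoutWeights (w : WeightStructure C) (m n : ℤ) (M : C) : Prop :=
  w.KillsWeights m n (𝟙 M)

end WeightStructure

namespace WeightStructure

section AuxLemmas

variable (w : WeightStructure C)

/-- `C_{w≤0}` is closed under isomorphisms. -/
lemma le_iso {X Y : C} (e : X ≅ Y) (h : w.le Y) : w.le X :=
  w.le_retract e.hom e.inv e.hom_inv_id h

/-- `C_{w≥0}` is closed under isomorphisms. -/
lemma ge_iso {X Y : C} (e : X ≅ Y) (h : w.ge Y) : w.ge X :=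
  w.ge_retract e.hom e.inv e.hom_inv_id h

/-- `C_{w≥0}` is stable under nonnegative shifts. -/
lemma ge_shift_nat (k : ℕ) {X : C} (h : w.ge X) :
    w.ge ((shiftFunctor C (k : ℤ)).obj X) := by
  induction k with
  | zero =>
      simp only [Nat.cast_zero]
      exact w.ge_iso ((shiftFunctorZero C ℤ).app X) h
  | succ k ih =>
      have hcast : ((k + 1 : ℕ) : ℤ) = (k : ℤ) + 1 := by push_cast; ring
      rw [hcast]
      exact w.ge_iso ((shiftFunctorAdd' C (k : ℤ) (1 : ℤ) ((k : ℤ) + 1) rfl).app X)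
        (w.ge_shift ih)

/-- Retract-closedness of `C_{w≤i}`. -/
lemma leDeg_retract {i : ℤ} {X Y : C} (f : X ⟶ Y) (r : Y ⟶ X) (hfr : f ≫ r = 𝟙 X)
    (hY : w.leDeg i Y) : w.leDeg i X :=
  w.le_retract ((shiftFunctor C (-i)).map f) ((shiftFunctor C (-i)).map r)
    (by rw [← Functor.map_comp, hfr]; exact (shiftFunctor C (-i)).map_id X) hY

/-- Retract-closedness of `C_{w≥i}`. -/
lemma geDeg_retract {i : ℤ} {X Y : C} (f : X ⟶ Y) (r : Y ⟶ X) (hfr : f ≫ r = 𝟙 X)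
    (hY : w.geDeg i Y) : w.geDeg i X :=
  w.ge_retract ((shiftFunctor C (-i)).map f) ((shiftFunctor C (-i)).map r)
    (by rw [← Functor.map_comp, hfr]; exact (shiftFunctor C (-i)).map_id X) hY

/-- If `Y ∈ C_{w≥j+1}` then `Y[-1] ∈ C_{w≥j}`. -/
lemma geDeg_shift_neg_one {j : ℤ} {Y : C} (h : w.geDeg (j + 1) Y) :
    w.geDeg j ((shiftFunctor C (-1 : ℤ)).obj Y) := by
  have e : (shiftFunctor C (-j)).obj ((shiftFunctor C (-1 : ℤ)).obj Y) ≅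
      (shiftFunctor C (-(j + 1))).obj Y :=
    ((shiftFunctorAdd' C (-1 : ℤ) (-j) (-(j + 1)) (by ring)).app Y).symm
  exact w.ge_iso e h

/-- Orthogonality in general degrees: `Hom(C_{w≤i}, C_{w≥j}) = 0` when `i < j`. -/
lemma hom_zero_of_lt {i j : ℤ} (hij : i < j) {X Y : C} (hX : w.leDeg i X)
    (hY : w.geDeg j Y) (φ : X ⟶ Y) : φ = 0 := by
  set k : ℕ := (j - i - 1).toNat with hkdef
  have hk : (k : ℤ) = j - i - 1 := Int.toNat_of_nonneg (by omega)
  set Z := (shiftFunctor C (k : ℤ)).obj ((shiftFunctor C (-j)).obj Y) with hZdef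
  have hZ : w.ge Z := w.ge_shift_nat k hY
  let α₁ : (shiftFunctor C (-i)).obj Y ≅
      (shiftFunctor C ((k : ℤ) + 1)).obj ((shiftFunctor C (-j)).obj Y) :=
    (shiftFunctorAdd' C (-j) ((k : ℤ) + 1) (-i) (by omega)).app Y
  let α₂ : (shiftFunctor C ((k : ℤ) + 1)).obj ((shiftFunctor C (-j)).obj Y) ≅
      (shiftFunctor C (1 : ℤ)).obj Z :=
    (shiftFunctorAdd' C (k : ℤ) (1 : ℤ) ((k : ℤ) + 1) rfl).app
      ((shiftFunctor C (-j)).obj Y)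
  have h0 : (shiftFunctor C (-i)).map φ ≫ α₁.hom ≫ α₂.hom = 0 := w.orth hX hZ _
  have h1 : (shiftFunctor C (-i)).map φ = 0 := by
    have h2 := congrArg (fun ψ => ψ ≫ α₂.inv ≫ α₁.inv) h0
    simpa using h2
  exact (shiftFunctor C (-i)).map_injective (by rw [h1, Functor.map_zero])

end AuxLemmas

end WeightStructure

section MainAux

set_option linter.unusedSectionVars false

private lemma aux_quartic {A : C} (u : A ⟶ A)
    (h : (u - u ≫ u) ≫ (u - u ≫ u) = 0) :
    u ≫ u ≫ u ≫ u = u ≫ u ≫ u + u ≫ u ≫ u - u ≫ u := by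
  rw [← sub_eq_zero]
  calc u ≫ u ≫ u ≫ u - (u ≫ u ≫ u + u ≫ u ≫ u - u ≫ u)
      = (u - u ≫ u) ≫ (u - u ≫ u) := by
        simp only [Preadditive.sub_comp, Preadditive.comp_sub, Category.assoc]
        abel
    _ = 0 := h

private lemma aux_idem {A : C} (u : A ⟶ A)
    (h4 : u ≫ u ≫ u ≫ u = u ≫ u ≫ u + u ≫ u ≫ u - u ≫ u) :
    (u ≫ u ≫ (𝟙 A + 𝟙 A + 𝟙 A - u - u)) ≫ (u ≫ u ≫ (𝟙 A + 𝟙 A + 𝟙 A - u - u))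
      = u ≫ u ≫ (𝟙 A + 𝟙 A + 𝟙 A - u - u) := by
  simp only [Preadditive.sub_comp, Preadditive.add_comp, Preadditive.comp_sub,
    Preadditive.comp_add, Category.id_comp, Category.comp_id, Category.assoc]
  simp only [h4, Preadditive.comp_sub, Preadditive.comp_add, Category.assoc]
  abel

private lemma aux_idem_comp {A O : C} (u : A ⟶ A) (f : A ⟶ O) (huf : u ≫ f = f) :
    (u ≫ u ≫ (𝟙 A + 𝟙 A + 𝟙 A - u - u)) ≫ f = f := by
  simp only [Preadditive.sub_comp, Preadditive.add_comp, Category.id_comp,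
    Preadditive.comp_sub, Preadditive.comp_add, Category.assoc, huf]
  abel

private lemma aux_NN {X Y : C} (N : X ⟶ X) (s : X ⟶ Y) (j : Y ⟶ X)
    (hs : N = s ≫ j) (hNs : N ≫ s = 0) : N ≫ N = 0 := by
  calc N ≫ N = N ≫ (s ≫ j) := by rw [← hs]
    _ = (N ≫ s) ≫ j := (Category.assoc _ _ _).symm
    _ = 0 := by rw [hNs, zero_comp]

end MainAux

/-- Theorem 2.1.1(8): in a Karoubian triangulated category, any object `O` without weights
`m,…,n` admits a decomposition avoiding weights `m,…,n`, i.e. a distinguished triangle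
`X → O → Y → X[1]` with `X ∈ C_{w≤m-1}` and `Y ∈ C_{w≥n+1}`. -/
theorem withoutWeights_has_avoiding_decomposition [IsIdempotentComplete C]
    (w : WeightStructure C) (m n : ℤ) (hmn : m ≤ n) (O : C)
    (hO : w.WithoutWeights m n O) :
    ∃ (X Y : C) (f : X ⟶ O) (p : O ⟶ Y) (δ : Y ⟶ (shiftFunctor C (1 : ℤ)).obj X),
      Triangle.mk f p δ ∈ (distTriang C) ∧ w.leDeg (m - 1) X ∧ w.geDeg (n + 1) Y := by
  obtain ⟨A, B, A', B', f, p, δ, f', p', δ', ⟨hT1, hA, hB⟩, ⟨hT2, hA', hB'⟩, hz⟩ := hO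
  have hz' : f ≫ p' = 0 := by simpa using hz
  -- factor `f` through `f'`
  have hexa : ∃ a : A ⟶ A', f = a ≫ f' := Triangle.coyoneda_exact₂ _ hT2 f hz'
  obtain ⟨a, ha⟩ := hexa
  -- `f' ≫ p = 0` by orthogonality, so `f'` factors through `f`
  have hf'p : f' ≫ p = 0 := w.hom_zero_of_lt (show m - 1 < n + 1 by omega) hA' hB _
  have hexc : ∃ c : A' ⟶ A, f' = c ≫ f := Triangle.coyoneda_exact₂ _ hT1 f' hf'p
  obtain ⟨c, hc⟩ := hexc
  -- `u := a ≫ c` satisfies `u ≫ f = f`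
  have huf : (a ≫ c) ≫ f = f := by rw [Category.assoc, ← hc, ← ha]
  have hNf : ((a ≫ c) - (a ≫ c) ≫ (a ≫ c)) ≫ f = 0 := by
    rw [Preadditive.sub_comp, huf, Category.assoc, huf, huf, sub_self]
  -- factor `N := u - u ≫ u` through `B⟦-1⟧` via the inverse rotation of the first triangle
  have hT1' := inv_rot_of_distTriang _ hT1
  have hexs : ∃ s : A ⟶ (shiftFunctor C (-1 : ℤ)).obj B,
      ((a ≫ c) - (a ≫ c) ≫ (a ≫ c)) = s ≫ (Triangle.mk f p δ).invRotate.mor₁ :=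
    Triangle.coyoneda_exact₂ _ hT1' ((a ≫ c) - (a ≫ c) ≫ (a ≫ c)) hNf
  obtain ⟨s, hs⟩ := hexs
  -- `c ≫ s = 0` by orthogonality (this is where `m ≤ n` is used)
  have hB1 : w.geDeg n ((shiftFunctor C (-1 : ℤ)).obj B) := w.geDeg_shift_neg_one hB
  have hcs : c ≫ s = 0 := w.hom_zero_of_lt (show m - 1 < n by omega) hA' hB1 _
  -- hence `N ≫ N = 0`
  have hNs : ((a ≫ c) - (a ≫ c) ≫ (a ≫ c)) ≫ s = 0 := by
    simp only [Preadditive.sub_comp, Category.assoc, hcs, comp_zero, sub_zero, sub_self]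
  have hNN : ((a ≫ c) - (a ≫ c) ≫ (a ≫ c)) ≫ ((a ≫ c) - (a ≫ c) ≫ (a ≫ c)) = 0 :=
    aux_NN _ _ _ hs hNs
  -- correct `u` to the idempotent `e = 3u² - 2u³`
  have h4 := aux_quartic (a ≫ c) hNN
  have hee := aux_idem (a ≫ c) h4
  have hef := aux_idem_comp (a ≫ c) f huf
  -- split the idempotent
  obtain ⟨Aplus, i, r, hir, hri⟩ := IsIdempotentComplete.idempotents_split A
    ((a ≫ c) ≫ (a ≫ c) ≫ (𝟙 A + 𝟙 A + 𝟙 A - (a ≫ c) - (a ≫ c))) hee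
  -- the desired triangle is the cone of `i ≫ f`
  obtain ⟨Y, g, h, hD⟩ := distinguished_cocone_triangle (i ≫ f)
  -- morphism of triangles `T1 ⟶ D` extending `(r, 𝟙 O)`
  obtain ⟨q, hq1, hq2⟩ : ∃ q : B ⟶ Y, p ≫ q = 𝟙 O ≫ g ∧
      δ ≫ (shiftFunctor C (1 : ℤ)).map r = q ≫ h := complete_distinguished_triangle_morphism _ _ hT1 hD r (𝟙 O)
    (by change f ≫ 𝟙 O = r ≫ (i ≫ f); rw [Category.comp_id, ← Category.assoc, hri, hef])
  -- morphism of triangles `D ⟶ T1` extending `(i, 𝟙 O)`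
  obtain ⟨t, ht1, ht2⟩ : ∃ t : Y ⟶ B, g ≫ t = 𝟙 O ≫ p ∧
      h ≫ (shiftFunctor C (1 : ℤ)).map i = t ≫ δ := complete_distinguished_triangle_morphism _ _ hD hT1 i (𝟙 O)
    (by change (i ≫ f) ≫ 𝟙 O = i ≫ f; rw [Category.comp_id])
  change p ≫ q = 𝟙 O ≫ g at hq1
  change δ ≫ (shiftFunctor C (1 : ℤ)).map r = q ≫ h at hq2
  change g ≫ t = 𝟙 O ≫ p at ht1
  change h ≫ (shiftFunctor C (1 : ℤ)).map i = t ≫ δ at ht2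
  rw [Category.id_comp] at hq1 ht1
  -- the composite `t ≫ q : Y ⟶ Y` is an isomorphism
  haveI hiso : IsIso (t ≫ q) := by
    refine isIso₃_of_isIso₁₂
      (Triangle.homMk (Triangle.mk (i ≫ f) g h) (Triangle.mk (i ≫ f) g h)
        (𝟙 Aplus) (𝟙 O) (t ≫ q)
        (by change (i ≫ f) ≫ 𝟙 O = 𝟙 Aplus ≫ (i ≫ f); rw [Category.comp_id, Category.id_comp])
        (by change g ≫ (t ≫ q) = 𝟙 O ≫ g; rw [Category.id_comp, ← Category.assoc, ht1, hq1])
        (by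
          change h ≫ (shiftFunctor C (1 : ℤ)).map (𝟙 Aplus) = (t ≫ q) ≫ h
          rw [CategoryTheory.Functor.map_id, Category.comp_id, Category.assoc, ← hq2,
            ← Category.assoc, ← ht2, Category.assoc, ← Functor.map_comp, hir,
            CategoryTheory.Functor.map_id, Category.comp_id]))
      hD hD ?_ ?_
    · change IsIso (𝟙 Aplus); infer_instance
    · change IsIso (𝟙 O); infer_instance
  -- `Y` is a retract of `B`, hence `Y ∈ C_{w≥n+1}`
  have hYretr : t ≫ (q ≫ inv (t ≫ q)) = 𝟙 Y := by
    rw [← Category.assoc]; exact IsIso.hom_inv_id (t ≫ q)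
  have hgeY : w.geDeg (n + 1) Y := w.geDeg_retract t (q ≫ inv (t ≫ q)) hYretr hB
  -- `Aplus` is a retract of `A'`, hence `Aplus ∈ C_{w≤m-1}`
  have haγ : (i ≫ a) ≫ ((c ≫ (a ≫ c) ≫ (𝟙 A + 𝟙 A + 𝟙 A - (a ≫ c) - (a ≫ c))) ≫ r)
      = i ≫ ((a ≫ c) ≫ (a ≫ c) ≫ (𝟙 A + 𝟙 A + 𝟙 A - (a ≫ c) - (a ≫ c))) ≫ r := by
    simp only [Category.assoc]
  have hretrA : (i ≫ a) ≫ ((c ≫ (a ≫ c) ≫ (𝟙 A + 𝟙 A + 𝟙 A - (a ≫ c) - (a ≫ c))) ≫ r)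
      = 𝟙 Aplus := by
    rw [haγ, ← hri]
    simp only [Category.assoc, hir, Category.comp_id]
  have hleAplus : w.leDeg (m - 1) Aplus :=
    w.leDeg_retract (i ≫ a)
      ((c ≫ (a ≫ c) ≫ (𝟙 A + 𝟙 A + 𝟙 A - (a ≫ c) - (a ≫ c))) ≫ r) hretrA hA'
  exact ⟨Aplus, Y, i ≫ f, g, h, hD, hleAplus, hgeY⟩
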